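/- Let f be a homogeneous symmetric polynomial of degree 3 in R[x_1,...,x_n] which is not a scalar multiple of p_1³ = (x_1+...+x_n)³. Then the real span of ∂f/∂x_1, ..., ∂f/∂x_n together with E^{(2)}(f) = Σ_j x_j ∂²f/∂x_j² has dimension at least n. -/

import Mathlib

open MvPolynomial

/-- `E^{(2)}(f) = Σ_j x_j ∂²f/∂x_j²`. -/
noncomputable def polarE2 (n : ℕ) (f : MvPolynomial (Fin n) ℝ) : MvPolynomial (Fin n) ℝ :=
  ∑ j : Fin n, X j * pderiv j (pderiv j f)

/-- The span of the first-order partial derivatives of `f` together with `E^{(2)}(f)`. -/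
noncomputable def exceptionSpan (n : ℕ) (f : MvPolynomial (Fin n) ℝ) :
    Submodule ℝ (MvPolynomial (Fin n) ℝ) :=
  Submodule.span ℝ (Set.range (fun j : Fin n => pderiv j f) ∪ {polarE2 n f})

/-- `f` is an `n`-exception if the span of `∂f/∂x_1, …, ∂f/∂x_n, E^{(2)}(f)`
has dimension exactly `n`. -/
def IsException (n : ℕ) (f : MvPolynomial (Fin n) ℝ) : Prop :=
  Module.finrank ℝ (exceptionSpan n f) = n

open Finsupp in
private lemma coeff_pderiv' {n : ℕ} (i : Fin n) (f : MvPolynomial (Fin n) ℝ) (m : Fin n →₀ ℕ) :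
    coeff m (pderiv i f) = ((m i : ℝ) + 1) * coeff (m + Finsupp.single i 1) f := by
  induction f using MvPolynomial.induction_on' with
  | add p q hp hq => simp [map_add, hp, hq]; ring
  | monomial u a =>
    rw [pderiv_monomial, coeff_monomial, coeff_monomial]
    by_cases h : u = m + Finsupp.single i 1
    · subst h
      rw [if_pos (by rw [add_tsub_cancel_right]), if_pos rfl]
      simp [Finsupp.add_apply, Finsupp.single_eq_same]
      ring
    · rw [if_neg h]
      split_ifs with h2
      · rcases Nat.eq_zero_or_pos (u i) with hu | hu
        · simp [hu]
        · exfalso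
          apply h
          ext a'
          rw [Finsupp.add_apply, ← h2, Finsupp.tsub_apply, Finsupp.single_apply]
          split_ifs with ha'
          · subst ha'; omega
          · omega
      · ring

private lemma sum_ite_one' {n : ℕ} (g : Fin n → ℝ) (i : Fin n) (p q : ℝ) :
    ∑ j, g j * (if j = i then p else q) = (∑ j, g j) * q + g i * (p - q) := by
  have h : ∀ j, g j * (if j = i then p else q)
      = g j * q + (if j = i then g j * (p - q) else 0) := by
    intro j; split_ifs <;> ring
  rw [Finset.sum_congr rfl fun j _ => h j, Finset.sum_add_distrib,
    Finset.sum_ite_eq' Finset.univ i (fun j => g j * (p - q)), if_pos (Finset.mem_univ i),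
    ← Finset.sum_mul]

private lemma sum_ite_two' {n : ℕ} (g : Fin n → ℝ) {i k : Fin n} (hik : i ≠ k) (p q : ℝ) :
    ∑ j, g j * (if j = i ∨ j = k then p else q)
      = (∑ j, g j) * q + (g i + g k) * (p - q) := by
  have h : ∀ j, g j * (if j = i ∨ j = k then p else q)
      = g j * q + ((if j = i then g j * (p - q) else 0) + (if j = k then g j * (p - q) else 0)) := by
    intro j
    by_cases h1 : j = i
    · subst h1; rw [if_pos (Or.inl rfl), if_pos rfl, if_neg hik]; ring
    · by_cases h2 : j = k
      · subst h2; rw [if_pos (Or.inr rfl), if_neg h1, if_pos rfl]; ring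
      · rw [if_neg (by tauto), if_neg h1, if_neg h2]; ring
  rw [Finset.sum_congr rfl fun j _ => h j, Finset.sum_add_distrib, Finset.sum_add_distrib,
    Finset.sum_ite_eq' Finset.univ i (fun j => g j * (p - q)), if_pos (Finset.mem_univ i),
    Finset.sum_ite_eq' Finset.univ k (fun j => g j * (p - q)), if_pos (Finset.mem_univ k),
    ← Finset.sum_mul]
  ring

private lemma mydegree_add {n : ℕ} (d e : Fin n →₀ ℕ) :
    (d + e).degree = d.degree + e.degree := by
  simp [Finsupp.degree_eq_weight_one, map_add]

private lemma mydegree_single {n : ℕ} (i : Fin n) (k : ℕ) :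
    (Finsupp.single i k).degree = k := by
  simp [Finsupp.degree_eq_weight_one, Finsupp.weight_apply, Finsupp.sum_single_index]

private lemma exists_single_add' {n : ℕ} (d : Fin n →₀ ℕ) (m : ℕ) (hd : d.degree = m + 1) :
    ∃ (i : Fin n) (d' : Fin n →₀ ℕ), d'.degree = m ∧ d = Finsupp.single i 1 + d' := by
  have hne : d ≠ 0 := by
    intro h; rw [h, map_zero] at hd; omega
  obtain ⟨i, hi⟩ := Finsupp.support_nonempty_iff.mpr hne
  have hi' : d i ≠ 0 := Finsupp.mem_support_iff.mp hi
  have key : d = Finsupp.single i 1 + (d - Finsupp.single i 1) := by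
    ext a
    rw [Finsupp.add_apply, Finsupp.tsub_apply, Finsupp.single_apply]
    split_ifs with h
    · subst h; omega
    · omega
  refine ⟨i, d - Finsupp.single i 1, ?_, key⟩
  have := mydegree_add (Finsupp.single i 1) (d - Finsupp.single i 1)
  rw [← key, mydegree_single] at this
  omega

private lemma degree3_decomp {n : ℕ} (d : Fin n →₀ ℕ) (hd : d.degree = 3) :
    ∃ i j k : Fin n,
      d = Finsupp.single i 1 + Finsupp.single j 1 + Finsupp.single k 1 := by
  obtain ⟨i, d2, hd2, rfl⟩ := exists_single_add' d 2 hd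
  obtain ⟨j, d3, hd3, rfl⟩ := exists_single_add' d2 1 hd2
  obtain ⟨k, d4, hd4, rfl⟩ := exists_single_add' d3 0 hd3
  rw [Finsupp.degree_eq_zero_iff] at hd4
  subst hd4
  exact ⟨i, j, k, by rw [add_zero, add_assoc]⟩

private lemma exists_perm2 {n : ℕ} (i k i' k' : Fin n) (h : i ≠ k) (h' : i' ≠ k') :
    ∃ σ : Equiv.Perm (Fin n), σ i' = i ∧ σ k' = k := by
  set τ := Equiv.swap i' i with hτ
  refine ⟨(Equiv.swap k' (τ k)).trans τ, ?_, ?_⟩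
  · rw [Equiv.trans_apply]
    rw [Equiv.swap_apply_of_ne_of_ne h' (by
      intro hh
      apply h
      have h2 : τ i' = τ (τ k) := congrArg τ hh
      rw [Equiv.swap_apply_left, Equiv.swap_apply_self] at h2
      exact h2)]
    exact Equiv.swap_apply_left i' i
  · rw [Equiv.trans_apply, Equiv.swap_apply_left, Equiv.swap_apply_self]

private lemma exists_perm3 {n : ℕ} (i j k i' j' k' : Fin n)
    (hij : i ≠ j) (hik : i ≠ k) (hjk : j ≠ k)
    (hij' : i' ≠ j') (hik' : i' ≠ k') (hjk' : j' ≠ k') :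
    ∃ σ : Equiv.Perm (Fin n), σ i' = i ∧ σ j' = j ∧ σ k' = k := by
  obtain ⟨τ, h1, h2⟩ := exists_perm2 i j i' j' hij hij'
  refine ⟨(Equiv.swap k' (τ.symm k)).trans τ, ?_, ?_, ?_⟩
  · rw [Equiv.trans_apply, Equiv.swap_apply_of_ne_of_ne hik' (by
      intro hh
      apply hik
      rw [hh, Equiv.apply_symm_apply] at h1
      exact h1.symm), h1]
  · rw [Equiv.trans_apply, Equiv.swap_apply_of_ne_of_ne hjk' (by
      intro hh
      apply hjk
      rw [hh, Equiv.apply_symm_apply] at h2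
      exact h2.symm), h2]
  · rw [Equiv.trans_apply, Equiv.swap_apply_left, Equiv.apply_symm_apply]

private lemma exists_third {n : ℕ} (h3 : 3 ≤ n) (j k : Fin n) :
    ∃ l : Fin n, l ≠ j ∧ l ≠ k := by
  by_contra h
  push_neg at h
  have hsub : (Finset.univ : Finset (Fin n)) ⊆ {j, k} := by
    intro l _
    rcases eq_or_ne l j with h1 | h1
    · simp [h1]
    · simp [h l h1]
  have hcard := Finset.card_le_card hsub
  have h2 : ({j, k} : Finset (Fin n)).card ≤ 2 :=
    (Finset.card_insert_le _ _).trans (by simp)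
  rw [Finset.card_univ, Fintype.card_fin] at hcard
  omega

section P1
variable {n : ℕ}

noncomputable abbrev p1poly (n : ℕ) : MvPolynomial (Fin n) ℝ := ∑ j : Fin n, X j

private lemma coeff_p1 (k : Fin n) : coeff (Finsupp.single k 1) (p1poly n) = 1 := by
  rw [coeff_sum]
  classical
  rw [Finset.sum_eq_single k (fun j _ hj => by
    rw [coeff_X', if_neg]
    rw [Finsupp.single_eq_single_iff]
    push_neg
    exact ⟨fun h => absurd h hj, fun h => absurd h one_ne_zero⟩)
    (fun h => absurd (Finset.mem_univ k) h)]
  exact coeff_X_same k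

private lemma pderiv_p1 (i : Fin n) : pderiv i (p1poly n) = 1 := by
  classical
  rw [map_sum]
  rw [Finset.sum_eq_single i (fun j _ hj => pderiv_X_of_ne hj)
    (fun h => absurd (Finset.mem_univ i) h)]
  exact pderiv_X_self i

private lemma pderiv_p1_pow (i : Fin n) (k : ℕ) :
    pderiv i (p1poly n ^ (k + 1)) = C ((k:ℝ) + 1) * p1poly n ^ k := by
  rw [pderiv_pow, pderiv_p1, mul_one, Nat.add_sub_cancel]
  congr 1
  push_cast
  simp [Nat.cast_add]

private lemma coeff_p1_sq_diag (i : Fin n) : coeff (Finsupp.single i 2) (p1poly n ^ 2) = 1 := by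
  have h := coeff_pderiv' i (p1poly n ^ 2) (Finsupp.single i 1)
  rw [pderiv_p1_pow i 1, coeff_C_mul, pow_one, coeff_p1, Finsupp.single_eq_same,
    ← Finsupp.single_add] at h
  norm_num at h
  linarith

private lemma coeff_p1_sq_off (i k : Fin n) (hik : i ≠ k) :
    coeff (Finsupp.single i 1 + Finsupp.single k 1) (p1poly n ^ 2) = 2 := by
  have h := coeff_pderiv' i (p1poly n ^ 2) (Finsupp.single k 1)
  rw [pderiv_p1_pow i 1, coeff_C_mul, pow_one, coeff_p1] at h
  rw [Finsupp.single_apply, if_neg (Ne.symm hik)] at h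
  rw [add_comm (Finsupp.single k 1)] at h
  norm_num at h
  exact h.symm

private lemma coeff_p1_cube_3 (i : Fin n) : coeff (Finsupp.single i 3) (p1poly n ^ 3) = 1 := by
  have h := coeff_pderiv' i (p1poly n ^ 3) (Finsupp.single i 2)
  rw [pderiv_p1_pow i 2, coeff_C_mul, coeff_p1_sq_diag, Finsupp.single_eq_same,
    ← Finsupp.single_add] at h
  norm_num at h
  linarith

private lemma coeff_p1_cube_21 (i k : Fin n) (hik : i ≠ k) :
    coeff (Finsupp.single i 2 + Finsupp.single k 1) (p1poly n ^ 3) = 3 := by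
  have h := coeff_pderiv' i (p1poly n ^ 3) (Finsupp.single i 1 + Finsupp.single k 1)
  rw [pderiv_p1_pow i 2, coeff_C_mul, coeff_p1_sq_off i k hik] at h
  rw [Finsupp.add_apply, Finsupp.single_eq_same, Finsupp.single_apply, if_neg (Ne.symm hik)] at h
  rw [show Finsupp.single i 1 + Finsupp.single k 1 + Finsupp.single i 1
      = Finsupp.single i 2 + Finsupp.single k 1 by
    ext a; simp only [Finsupp.add_apply, Finsupp.single_apply]; split_ifs <;> omega] at h
  norm_num at h
  linarith

private lemma coeff_p1_cube_111 (i j k : Fin n) (hij : i ≠ j) (hik : i ≠ k) (hjk : j ≠ k) :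
    coeff (Finsupp.single i 1 + Finsupp.single j 1 + Finsupp.single k 1) (p1poly n ^ 3) = 6 := by
  have h := coeff_pderiv' i (p1poly n ^ 3) (Finsupp.single j 1 + Finsupp.single k 1)
  rw [pderiv_p1_pow i 2, coeff_C_mul, coeff_p1_sq_off j k hjk] at h
  rw [Finsupp.add_apply, Finsupp.single_apply, if_neg (Ne.symm hij),
    Finsupp.single_apply, if_neg (Ne.symm hik)] at h
  rw [show Finsupp.single j 1 + Finsupp.single k 1 + Finsupp.single i 1
      = Finsupp.single i 1 + Finsupp.single j 1 + Finsupp.single k 1 by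
    ext a; simp only [Finsupp.add_apply, Finsupp.single_apply]; split_ifs <;> omega] at h
  norm_num at h
  exact h.symm

end P1

private lemma eq_smul_p1_cubed {n : ℕ} (f : MvPolynomial (Fin n) ℝ)
    (hhom : f.IsHomogeneous 3) (a : ℝ)
    (ha : ∀ i, coeff (Finsupp.single i 3) f = a)
    (hb : ∀ i k, i ≠ k → coeff (Finsupp.single i 2 + Finsupp.single k 1) f = 3 * a)
    (hc : ∀ i j k, i ≠ j → i ≠ k → j ≠ k →
      coeff (Finsupp.single i 1 + Finsupp.single j 1 + Finsupp.single k 1) f = 6 * a) :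
    f = a • (∑ j : Fin n, X j) ^ 3 := by
  have hp3 : ((∑ j : Fin n, X j : MvPolynomial (Fin n) ℝ) ^ 3).IsHomogeneous 3 := by
    simpa using (IsHomogeneous.sum Finset.univ _ 1
      (fun i _ => isHomogeneous_X ℝ i)).pow 3
  apply MvPolynomial.ext
  intro d
  rw [coeff_smul, smul_eq_mul]
  by_cases hd : d.degree = 3
  · obtain ⟨i, j, k, rfl⟩ := degree3_decomp d hd
    by_cases hij : i = j
    · subst hij
      by_cases hik : i = k
      · subst hik
        rw [show Finsupp.single i 1 + Finsupp.single i 1 + Finsupp.single i 1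
            = Finsupp.single i 3 by
          ext a'; simp only [Finsupp.add_apply, Finsupp.single_apply]; split_ifs <;> omega]
        rw [ha, coeff_p1_cube_3, mul_one]
      · rw [show Finsupp.single i 1 + Finsupp.single i 1 + Finsupp.single k 1
            = Finsupp.single i 2 + Finsupp.single k 1 by
          ext a'; simp only [Finsupp.add_apply, Finsupp.single_apply]; split_ifs <;> omega]
        rw [hb i k hik, coeff_p1_cube_21 i k hik]; ring
    · by_cases hik : i = k
      · subst hik
        rw [show Finsupp.single i 1 + Finsupp.single j 1 + Finsupp.single i 1
            = Finsupp.single i 2 + Finsupp.single j 1 by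
          ext a'; simp only [Finsupp.add_apply, Finsupp.single_apply]; split_ifs <;> omega]
        rw [hb i j (fun h => hij h), coeff_p1_cube_21 i j (fun h => hij h)]; ring
      · by_cases hjk : j = k
        · subst hjk
          rw [show Finsupp.single i 1 + Finsupp.single j 1 + Finsupp.single j 1
              = Finsupp.single j 2 + Finsupp.single i 1 by
            ext a'; simp only [Finsupp.add_apply, Finsupp.single_apply]; split_ifs <;> omega]
          rw [hb j i (fun h => hij h.symm), coeff_p1_cube_21 j i (fun h => hij h.symm)]; ring
        · rw [hc i j k hij hik hjk, coeff_p1_cube_111 i j k hij hik hjk]; ring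
  · rw [hhom.coeff_eq_zero hd, hp3.coeff_eq_zero hd, mul_zero]

/-- If `f` is homogeneous symmetric of degree 3 in `n ≥ 2` variables and not a
scalar multiple of `p_1³ = (x_1 + ⋯ + x_n)³`, then the span of
`∂f/∂x_1, …, ∂f/∂x_n, E^{(2)}(f)` has dimension at least `n`. -/
theorem dim_ge_of_not_multiple_p1_cubed (n : ℕ) (hn : 2 ≤ n)
    (f : MvPolynomial (Fin n) ℝ) (hhom : f.IsHomogeneous 3)
    (hsym : ∀ σ : Equiv.Perm (Fin n), rename σ f = f)
    (hnm : ∀ t : ℝ, f ≠ t • (∑ j : Fin n, X j) ^ 3) :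
    n ≤ Module.finrank ℝ (exceptionSpan n f) := by
  classical
  have hco : ∀ (σ : Equiv.Perm (Fin n)) (d : Fin n →₀ ℕ),
      coeff (d.mapDomain σ) f = coeff d f := by
    intro σ d
    conv_lhs => rw [← hsym σ]
    exact coeff_rename_mapDomain σ σ.injective f d
  set i0 : Fin n := ⟨0, by omega⟩ with hi0
  set i1 : Fin n := ⟨1, by omega⟩ with hi1
  have h01 : i0 ≠ i1 := by simp [hi0, hi1, Fin.ext_iff]
  set a : ℝ := coeff (Finsupp.single i0 3) f with ha_def
  set b : ℝ := coeff (Finsupp.single i0 2 + Finsupp.single i1 1) f with hb_def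
  have ha : ∀ i, coeff (Finsupp.single i 3) f = a := by
    intro i
    have := hco (Equiv.swap i0 i) (Finsupp.single i0 3)
    rwa [Finsupp.mapDomain_single, Equiv.swap_apply_left] at this
  have hb : ∀ i k, i ≠ k → coeff (Finsupp.single i 2 + Finsupp.single k 1) f = b := by
    intro i k hik
    obtain ⟨σ, h1, h2⟩ := exists_perm2 i k i0 i1 hik h01
    have := hco σ (Finsupp.single i0 2 + Finsupp.single i1 1)
    rwa [Finsupp.mapDomain_add, Finsupp.mapDomain_single, Finsupp.mapDomain_single, h1, h2]
      at this
  obtain ⟨c, hc, hc2⟩ : ∃ c : ℝ,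
      (∀ i j k, i ≠ j → i ≠ k → j ≠ k →
        coeff (Finsupp.single i 1 + Finsupp.single j 1 + Finsupp.single k 1) f = c)
      ∧ (n = 2 → c = 6 * a) := by
    by_cases h3 : 3 ≤ n
    · set i2 : Fin n := ⟨2, by omega⟩ with hi2
      have h02 : i0 ≠ i2 := by simp [hi0, hi2, Fin.ext_iff]
      have h12 : i1 ≠ i2 := by simp [hi1, hi2, Fin.ext_iff]
      refine ⟨coeff (Finsupp.single i0 1 + Finsupp.single i1 1 + Finsupp.single i2 1) f,
        ?_, fun h => absurd h (by omega)⟩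
      intro i j k hij hik hjk
      obtain ⟨σ, h1, h2, h3'⟩ := exists_perm3 i j k i0 i1 i2 hij hik hjk h01 h02 h12
      have := hco σ (Finsupp.single i0 1 + Finsupp.single i1 1 + Finsupp.single i2 1)
      rwa [Finsupp.mapDomain_add, Finsupp.mapDomain_add, Finsupp.mapDomain_single,
        Finsupp.mapDomain_single, Finsupp.mapDomain_single, h1, h2, h3'] at this
    · refine ⟨6 * a, ?_, fun _ => rfl⟩
      intro i j k hij hik hjk
      exfalso
      have hi := i.isLt
      have hj := j.isLt
      have hk := k.isLt
      rw [Fin.ne_iff_vne] at hij hik hjk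
      omega
  -- pointwise coefficients of the partial derivatives
  have hD1 : ∀ i j : Fin n, coeff (Finsupp.single i 2) (pderiv j f)
      = if j = i then 3 * a else b := by
    intro i j
    rw [coeff_pderiv']
    by_cases hj : j = i
    · subst hj
      rw [if_pos rfl, Finsupp.single_eq_same, ← Finsupp.single_add]
      rw [ha]
      norm_num
    · rw [if_neg hj, Finsupp.single_apply, if_neg (Ne.symm hj)]
      rw [hb i j (Ne.symm hj)]
      norm_num
  have hD2 : ∀ i k j : Fin n, i ≠ k →
      coeff (Finsupp.single i 1 + Finsupp.single k 1) (pderiv j f)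
      = if j = i ∨ j = k then 2 * b else c := by
    intro i k j hik
    rw [coeff_pderiv']
    by_cases hj1 : j = i
    · subst hj1
      rw [if_pos (Or.inl rfl), Finsupp.add_apply, Finsupp.single_eq_same,
        Finsupp.single_apply, if_neg (Ne.symm hik)]
      rw [show Finsupp.single j 1 + Finsupp.single k 1 + Finsupp.single j 1
          = Finsupp.single j 2 + Finsupp.single k 1 by
        ext a'; simp only [Finsupp.add_apply, Finsupp.single_apply]; split_ifs <;> omega]
      rw [hb j k hik]
      norm_num
    · by_cases hj2 : j = k
      · subst hj2
        rw [if_pos (Or.inr rfl), Finsupp.add_apply, Finsupp.single_eq_same,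
          Finsupp.single_apply, if_neg hik]
        rw [show Finsupp.single i 1 + Finsupp.single j 1 + Finsupp.single j 1
            = Finsupp.single j 2 + Finsupp.single i 1 by
          ext a'; simp only [Finsupp.add_apply, Finsupp.single_apply]; split_ifs <;> omega]
        rw [hb j i (Ne.symm hik)]
        norm_num
      · rw [if_neg (by tauto), Finsupp.add_apply, Finsupp.single_apply, if_neg (Ne.symm hj1),
          Finsupp.single_apply, if_neg (Ne.symm hj2)]
        rw [hc i k j hik (Ne.symm hj1) (Ne.symm hj2)]
        norm_num
  -- coefficient equations from a representation
  have heq1 : ∀ (μ : Fin n → ℝ) (g : MvPolynomial (Fin n) ℝ),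
      (∑ j, μ j • pderiv j f) = g → ∀ i,
      (∑ j, μ j) * b + μ i * (3 * a - b) = coeff (Finsupp.single i 2) g := by
    intro μ g hrel i
    have := congrArg (coeff (Finsupp.single i 2)) hrel
    rw [coeff_sum] at this
    simp only [coeff_smul, smul_eq_mul] at this
    rw [Finset.sum_congr rfl (fun j _ => by rw [hD1 i j])] at this
    rwa [sum_ite_one' μ i (3 * a) b] at this
  have heq2 : ∀ (μ : Fin n → ℝ) (g : MvPolynomial (Fin n) ℝ),
      (∑ j, μ j • pderiv j f) = g → ∀ i k, i ≠ k →
      (∑ j, μ j) * c + (μ i + μ k) * (2 * b - c)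
        = coeff (Finsupp.single i 1 + Finsupp.single k 1) g := by
    intro μ g hrel i k hik
    have := congrArg (coeff (Finsupp.single i 1 + Finsupp.single k 1)) hrel
    rw [coeff_sum] at this
    simp only [coeff_smul, smul_eq_mul] at this
    rw [Finset.sum_congr rfl (fun j _ => by rw [hD2 i k j hik])] at this
    rwa [sum_ite_two' μ hik (2 * b) c] at this
  -- coefficient of E2
  have hE2co : ∀ i, coeff (Finsupp.single i 2) (polarE2 n f) = 6 * a := by
    intro i
    have hterm : ∀ j : Fin n, coeff (Finsupp.single i 2) (X j * pderiv j (pderiv j f))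
        = if j = i then 6 * a else 0 := by
      intro j
      rw [coeff_X_mul']
      by_cases hj : j = i
      · subst hj
        rw [if_pos (by simp [Finsupp.support_single_ne_zero]), if_pos rfl]
        rw [show Finsupp.single j 2 - Finsupp.single j 1 = Finsupp.single j 1 by
          ext a'; rw [Finsupp.tsub_apply]; simp only [Finsupp.single_apply]
          split_ifs <;> omega]
        rw [coeff_pderiv', coeff_pderiv', Finsupp.single_eq_same, ← Finsupp.single_add,
          Finsupp.single_eq_same, ← Finsupp.single_add, ha]
        norm_num
        ring
      · rw [if_neg hj, if_neg (by simp [Finsupp.support_single_ne_zero, hj])]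
    rw [polarE2, coeff_sum, Finset.sum_congr rfl (fun j _ => hterm j),
      Finset.sum_ite_eq' Finset.univ i (fun _ => 6 * a), if_pos (Finset.mem_univ i)]
  -- the exceptional identity
  have hfP : b = 3 * a → c = 6 * a → False := by
    intro h1 h2
    exact hnm a (eq_smul_p1_cubed f hhom a ha
      (fun i k hik => by rw [hb i k hik, h1])
      (fun i j k hij hik hjk => by rw [hc i j k hij hik hjk, h2]))
  -- linear algebra endgame
  have hnR : (2:ℝ) ≤ (n:ℝ) := by exact_mod_cast hn
  set D : Fin n → MvPolynomial (Fin n) ℝ := fun j => pderiv j f with hD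
  have hfinU : (Set.range D ∪ {polarE2 n f}).Finite :=
    (Set.finite_range D).union (Set.finite_singleton _)
  haveI : FiniteDimensional ℝ (exceptionSpan n f) := by
    rw [exceptionSpan]
    exact FiniteDimensional.span_of_finite ℝ hfinU
  have hspan_le : Submodule.span ℝ (Set.range D) ≤ exceptionSpan n f := by
    rw [exceptionSpan]
    exact Submodule.span_mono Set.subset_union_left
  by_cases hker : ∀ μ : Fin n → ℝ, (∑ j, μ j • D j) = 0 → ∀ i, μ i = 0
  · have hli : LinearIndependent ℝ D := Fintype.linearIndependent_iff.mpr hker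
    have := finrank_span_eq_card hli
    rw [Fintype.card_fin] at this
    calc n = Module.finrank ℝ (Submodule.span ℝ (Set.range D)) := this.symm
      _ ≤ Module.finrank ℝ (exceptionSpan n f) := Submodule.finrank_mono hspan_le
  · push_neg at hker
    obtain ⟨μ, hrel, i₀, hi₀⟩ := hker
    have hsum_const : ∀ t : ℝ, (∑ _j : Fin n, t) = n * t := by
      intro t
      rw [Finset.sum_const, Finset.card_univ, Fintype.card_fin, nsmul_eq_mul]
    have hK : b ≠ 0 ∧ 3 * a + ((n:ℝ) - 1) * b = 0 := by
      have E1 : ∀ i, (∑ j, μ j) * b + μ i * (3 * a - b) = 0 := by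
        intro i; rw [heq1 μ 0 hrel i, coeff_zero]
      have E2 : ∀ i k, i ≠ k →
          (∑ j, μ j) * c + (μ i + μ k) * (2 * b - c) = 0 := by
        intro i k hik; rw [heq2 μ 0 hrel i k hik, coeff_zero]
      set S : ℝ := ∑ j, μ j with hS
      by_cases hab : 3 * a - b = 0
      · have hbS : S * b = 0 := by have := E1 i₀; rw [hab] at this; linarith
        by_cases hb0 : b = 0
        · have ha0 : a = 0 := by linarith
          by_cases hcz : c = 0
          · exact absurd (hfP (by linarith) (by linarith)) id
          · have hn3 : 3 ≤ n := by
              rcases Nat.lt_or_ge n 3 with h | h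
              · exfalso; exact hcz (by rw [hc2 (by omega)]; linarith)
              · exact h
            have hpair : ∀ i k, i ≠ k → μ i + μ k = S := by
              intro i k hik
              have := E2 i k hik
              rw [hb0] at this
              have h2 : (S - (μ i + μ k)) * c = 0 := by linear_combination this
              rcases mul_eq_zero.mp h2 with h3 | h3
              · linarith
              · exact absurd h3 hcz
            have hconst : ∀ i, μ i = μ i₀ := by
              intro i
              rcases eq_or_ne i i₀ with h | h
              · rw [h]
              · obtain ⟨l, hl1, hl2⟩ := exists_third hn3 i i₀
                have e1 := hpair i l (Ne.symm hl1)
                have e2 := hpair i₀ l (Ne.symm hl2)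
                linarith
            have hSn : S = n * μ i₀ := by
              rw [hS, Finset.sum_congr rfl fun j _ => hconst j, hsum_const]
            obtain ⟨l, hl1, _⟩ := exists_third hn3 i₀ i₀
            have := hpair i₀ l (Ne.symm hl1)
            rw [hconst l, hSn] at this
            have hn2' : (n:ℝ) = 2 := by
              rcases mul_eq_zero.mp (show ((n:ℝ) - 2) * μ i₀ = 0 by linarith) with h | h
              · linarith
              · exact absurd h hi₀
            exfalso
            have : (3:ℝ) ≤ (n:ℝ) := by exact_mod_cast hn3
            linarith
        · have hS0 : S = 0 := by
            rcases mul_eq_zero.mp hbS with h | h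
            · exact h
            · exact absurd h hb0
          by_cases hcb : 2 * b - c = 0
          · exact absurd (hfP (by linarith) (by linarith)) id
          · have hpair : ∀ i k, i ≠ k → μ i + μ k = 0 := by
              intro i k hik
              have := E2 i k hik
              rw [hS0] at this
              rcases mul_eq_zero.mp (show (μ i + μ k) * (2 * b - c) = 0 by linarith) with h | h
              · exact h
              · exact absurd h hcb
            have hn3 : 3 ≤ n := by
              rcases Nat.lt_or_ge n 3 with h | h
              · exfalso
                apply hcb
                rw [hc2 (by omega)]
                linarith
              · exact h
            obtain ⟨l, hl1, hl2⟩ := exists_third hn3 i₀ i₀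
            obtain ⟨l', hl3, hl4⟩ := exists_third hn3 i₀ l
            have e1 := hpair i₀ l (Ne.symm hl1)
            have e2 := hpair i₀ l' (Ne.symm hl3)
            have e3 := hpair l l' (fun h => hl4 (h.symm))
            exfalso
            exact hi₀ (by linarith)
      · have hconst : ∀ i, μ i = μ i₀ := by
          intro i
          have e1 := E1 i
          have e2 := E1 i₀
          rcases mul_eq_zero.mp (show (μ i - μ i₀) * (3 * a - b) = 0 by linarith) with h | h
          · linarith
          · exact absurd h hab
        have hSn : S = n * μ i₀ := by
          rw [hS, Finset.sum_congr rfl fun j _ => hconst j, hsum_const]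
        have hab2 : 3 * a + ((n:ℝ) - 1) * b = 0 := by
          have := E1 i₀
          rw [hSn] at this
          rcases mul_eq_zero.mp (show μ i₀ * (3 * a + ((n:ℝ) - 1) * b) = 0 by
            linear_combination this) with h | h
          · exact absurd h hi₀
          · exact h
        constructor
        · intro hb0
          have ha0 : a = 0 := by rw [hb0] at hab2; linarith
          have h01' : (⟨0, by omega⟩ : Fin n) ≠ ⟨1, by omega⟩ := by simp [Fin.ext_iff]
          have e2 := E2 ⟨0, by omega⟩ ⟨1, by omega⟩ h01'
          rw [hconst ⟨0, by omega⟩, hconst ⟨1, by omega⟩, hSn, hb0] at e2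
          have hc0 : c = 0 := by
            rcases mul_eq_zero.mp (show μ i₀ * (((n:ℝ) - 2) * c) = 0 by
              linear_combination e2) with h | h
            · exact absurd h hi₀
            · rcases mul_eq_zero.mp h with h' | h'
              · rcases Nat.lt_or_ge n 3 with hh | hh
                · rw [hc2 (by omega)]; linarith
                · exfalso
                  have : (3:ℝ) ≤ (n:ℝ) := by exact_mod_cast hh
                  linarith
              · exact h'
          exact hfP (by linarith) (by linarith)
        · exact hab2
    obtain ⟨hb0, hab2⟩ := hK
    have habne : 3 * a - b ≠ 0 := by
      intro h
      have : (n:ℝ) * b = 0 := by linarith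
      rcases mul_eq_zero.mp this with h' | h'
      · linarith
      · exact hb0 h'
    have hker_const : ∀ ν : Fin n → ℝ, (∑ j, ν j • D j) = 0 → ∀ i, ν i = ν i₀ := by
      intro ν hν i
      have e1 := heq1 ν 0 hν i
      have e2 := heq1 ν 0 hν i₀
      rw [coeff_zero] at e1 e2
      rcases mul_eq_zero.mp (show (ν i - ν i₀) * (3 * a - b) = 0 by linarith) with h | h
      · linarith
      · exact absurd h habne
    have hE2notmem : polarE2 n f ∉ Submodule.span ℝ (Set.range D) := by
      intro hmem
      obtain ⟨ν, hν⟩ := (Submodule.mem_span_range_iff_exists_fun ℝ).mp hmem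
      have e1 : ∀ i, (∑ j, ν j) * b + ν i * (3 * a - b) = 6 * a := by
        intro i
        rw [heq1 ν (polarE2 n f) hν i, hE2co i]
      have hconst : ∀ i, ν i = ν i₀ := by
        intro i
        have h1 := e1 i
        have h2 := e1 i₀
        rcases mul_eq_zero.mp (show (ν i - ν i₀) * (3 * a - b) = 0 by linarith) with h | h
        · linarith
        · exact absurd h habne
      have hSn : (∑ j, ν j) = n * ν i₀ := by
        rw [Finset.sum_congr rfl fun j _ => hconst j, hsum_const]
      have h1 := e1 i₀
      rw [hSn] at h1
      have h6 : 6 * a = 0 := by linear_combination ν i₀ * hab2 - h1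
      have ha0 : a = 0 := by linarith
      have : ((n:ℝ) - 1) * b = 0 := by linarith
      rcases mul_eq_zero.mp this with h | h
      · linarith
      · exact hb0 h
    set L := Fintype.linearCombination ℝ D with hL
    have hrange : LinearMap.range L = Submodule.span ℝ (Set.range D) :=
      Fintype.range_linearCombination ℝ D
    have hrn := LinearMap.finrank_range_add_finrank_ker L
    rw [Module.finrank_pi, Fintype.card_fin] at hrn
    have hker1 : Module.finrank ℝ (LinearMap.ker L) ≤ 1 := by
      have hone : (fun _ => (1:ℝ) : Fin n → ℝ) ≠ 0 := by
        intro h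
        have := congrFun h i₀
        simp at this
      have hle : LinearMap.ker L ≤ Submodule.span ℝ {(fun _ => (1:ℝ) : Fin n → ℝ)} := by
        intro ν hν
        rw [LinearMap.mem_ker, hL, Fintype.linearCombination_apply] at hν
        rw [Submodule.mem_span_singleton]
        exact ⟨ν i₀, by funext j; simp [(hker_const ν hν j)]⟩
      calc Module.finrank ℝ (LinearMap.ker L)
          ≤ Module.finrank ℝ (Submodule.span ℝ {(fun _ => (1:ℝ) : Fin n → ℝ)}) :=
            Submodule.finrank_mono hle
        _ = 1 := finrank_span_singleton hone
    have hstrict : Submodule.span ℝ (Set.range D) < exceptionSpan n f := by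
      rw [lt_iff_le_and_ne]
      refine ⟨hspan_le, fun h => hE2notmem ?_⟩
      rw [h, exceptionSpan]
      exact Submodule.subset_span (Set.mem_union_right _ rfl)
    have hlt := Submodule.finrank_lt_finrank_of_lt hstrict
    rw [← hrange] at hspan_le hstrict hlt
    omega
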